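/- (Theorem 1) Let p : ℕ → ℝ satisfy 0 < p(N) < 1 for all N, N·p(N)/ln N → ∞, and N·(1−p(N))/ln N → ∞ as N → ∞. Then the difference H_Bp(N, p(N)) − (N²·H(p(N)) − log₂(N!)) is nonnegative for every N and tends to 0 as N → ∞. -/

import Mathlib

open Finset

attribute [local instance] Classical.propDecidable

noncomputable section

/-- Row equivalence of adjacency matrices: `A` and `B` are equivalent when some
permutation of the rows (i.e. a relabeling of the unlabeled vertex part) sends `A` to `B`. -/
def rowRelSetoid (N : ℕ) : Setoid (Fin N → Fin N → Bool) where
  r A B := ∃ σ : Equiv.Perm (Fin N), ∀ i j, A (σ i) j = B i j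
  iseqv := by
    refine ⟨fun A => ⟨1, fun i j => rfl⟩, ?_, ?_⟩
    · rintro A B ⟨σ, h⟩
      refine ⟨σ⁻¹, fun i j => ?_⟩
      rw [← h (σ⁻¹ i) j, ← Equiv.Perm.mul_apply, mul_inv_cancel, Equiv.Perm.one_apply]
    · rintro A B C ⟨σ, h⟩ ⟨τ, h'⟩
      refine ⟨σ * τ, fun i j => ?_⟩
      rw [Equiv.Perm.mul_apply, h (τ i) j, h' i j]

instance (N : ℕ) : Fintype (Quotient (rowRelSetoid N)) := Fintype.ofFinite _

/-- Number of `true` entries (edges) of an adjacency matrix. -/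
def edgeCount {N : ℕ} (A : Fin N → Fin N → Bool) : ℕ :=
  (univ.filter fun ij : Fin N × Fin N => A ij.1 ij.2 = true).card

/-- Probability of a fixed adjacency matrix under i.i.d. Bernoulli(p) entries. -/
def matProb (N : ℕ) (p : ℝ) (A : Fin N → Fin N → Bool) : ℝ :=
  p ^ edgeCount A * (1 - p) ^ (N ^ 2 - edgeCount A)

/-- The pushforward probability of a row-equivalence class (the partially-labeled
bipartite graph distribution). -/
def classProb (N : ℕ) (p : ℝ) (ω : Quotient (rowRelSetoid N)) : ℝ :=
  ∑ A : Fin N → Fin N → Bool,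
    if Quotient.mk (rowRelSetoid N) A = ω then matProb N p A else 0

/-- Shannon entropy (base 2) of the partially-labeled bipartite graph distribution. -/
def HBp (N : ℕ) (p : ℝ) : ℝ :=
  ∑ ω : Quotient (rowRelSetoid N), -(classProb N p ω * Real.logb 2 (classProb N p ω))

/-- Binary entropy function, base 2. -/
def binEnt (p : ℝ) : ℝ := -(p * Real.logb 2 p) - (1 - p) * Real.logb 2 (1 - p)

/-- Size of the row stabilizer (automorphism group) of a matrix. -/
def autCard {N : ℕ} (A : Fin N → Fin N → Bool) : ℕ :=
  Fintype.card {σ : Equiv.Perm (Fin N) // ∀ i j, A (σ i) j = A i j}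


def rowW (N : ℕ) (p : ℝ) (r : Fin N → Bool) : ℝ :=
  ∏ j, (if r j = true then p else 1 - p)

lemma sum_prod_rows {N : ℕ} (G : Fin N → (Fin N → Bool) → ℝ) :
    ∑ A : Fin N → Fin N → Bool, ∏ i, G i (A i) = ∏ i, ∑ r : Fin N → Bool, G i r :=
  (Fintype.prod_sum _).symm

lemma sum_prod_entries {N : ℕ} (h : Fin N → Bool → ℝ) :
    ∑ r : Fin N → Bool, ∏ j, h j (r j) = ∏ j, (h j true + h j false) := by
  rw [← Fintype.prod_sum]
  exact Finset.prod_congr rfl fun j _ => by rw [Fintype.sum_bool]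

lemma edgeCount_le {N : ℕ} (A : Fin N → Fin N → Bool) : edgeCount A ≤ N ^ 2 := by
  have := Finset.card_filter_le (univ : Finset (Fin N × Fin N))
      (fun ij => A ij.1 ij.2 = true)
  simpa [edgeCount, sq] using this

lemma matProb_eq_prod {N : ℕ} (p : ℝ) (A : Fin N → Fin N → Bool) :
    matProb N p A = ∏ i, rowW N p (A i) := by
  have h1 : ∏ i, rowW N p (A i)
      = ∏ ij : Fin N × Fin N, (if A ij.1 ij.2 = true then p else 1 - p) := by
    rw [Fintype.prod_prod_type]
    rfl
  rw [h1, Finset.prod_ite, Finset.prod_const, Finset.prod_const]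
  have h2 : (univ.filter fun ij : Fin N × Fin N => ¬ A ij.1 ij.2 = true).card
      = N ^ 2 - edgeCount A := by
    have := Finset.card_filter_add_card_filter_not (s := (univ : Finset (Fin N × Fin N)))
      (p := fun ij => A ij.1 ij.2 = true)
    have hcard : (univ : Finset (Fin N × Fin N)).card = N ^ 2 := by
      simp [sq]
    have he : (univ.filter fun ij : Fin N × Fin N => A ij.1 ij.2 = true).card = edgeCount A := rfl
    omega
  rw [h2]
  rfl

lemma sum_rowW {N : ℕ} (p : ℝ) : ∑ r : Fin N → Bool, rowW N p r = 1 := by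
  unfold rowW
  rw [sum_prod_entries (fun j b => if b = true then p else 1 - p)]
  simp

lemma sum_rowW_sq {N : ℕ} (p : ℝ) :
    ∑ r : Fin N → Bool, (rowW N p r) ^ 2 = (p ^ 2 + (1 - p) ^ 2) ^ N := by
  have : ∀ r : Fin N → Bool, (rowW N p r) ^ 2
      = ∏ j, (if r j = true then p else 1 - p) ^ 2 := by
    intro r; rw [rowW, ← Finset.prod_pow]
  rw [Finset.sum_congr rfl fun r _ => this r,
    sum_prod_entries (fun j b => (if b = true then p else 1 - p) ^ 2)]
  simp

lemma sum_matProb {N : ℕ} (p : ℝ) : ∑ A : Fin N → Fin N → Bool, matProb N p A = 1 := by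
  simp_rw [matProb_eq_prod]
  rw [sum_prod_rows]
  simp [sum_rowW]

lemma sum_matProb_entry {N : ℕ} (p : ℝ) (i₀ j₀ : Fin N) :
    ∑ A : Fin N → Fin N → Bool, matProb N p A * (if A i₀ j₀ = true then (1:ℝ) else 0) = p := by
  have key : ∀ A : Fin N → Fin N → Bool,
      matProb N p A * (if A i₀ j₀ = true then (1:ℝ) else 0)
      = ∏ i, (rowW N p (A i) * (if i = i₀ then (if A i j₀ = true then (1:ℝ) else 0) else 1)) := by
    intro A
    rw [Finset.prod_mul_distrib, ← matProb_eq_prod, Finset.prod_ite_eq' univ i₀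
      (fun i => if A i j₀ = true then (1:ℝ) else 0)]
    simp
  rw [Finset.sum_congr rfl fun A _ => key A, sum_prod_rows
    (fun i r => rowW N p r * (if i = i₀ then (if r j₀ = true then (1:ℝ) else 0) else 1))]
  have inner : ∀ i : Fin N, (∑ r : Fin N → Bool,
      rowW N p r * (if i = i₀ then (if r j₀ = true then (1:ℝ) else 0) else 1))
      = if i = i₀ then p else 1 := by
    intro i
    by_cases h : i = i₀
    · subst h
      simp only [eq_self_iff_true, if_true]
      have : ∀ r : Fin N → Bool, rowW N p r * (if r j₀ = true then (1:ℝ) else 0)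
          = ∏ j, ((if r j = true then p else 1 - p) * (if j = j₀ then (if r j = true then (1:ℝ) else 0) else 1)) := by
        intro r
        rw [Finset.prod_mul_distrib, ← rowW, Finset.prod_ite_eq' univ j₀
          (fun j => if r j = true then (1:ℝ) else 0)]
        simp
      rw [Finset.sum_congr rfl fun r _ => this r,
        sum_prod_entries (fun j b => (if b = true then p else 1 - p) * (if j = j₀ then (if b = true then (1:ℝ) else 0) else 1))]
      have : ∀ j : Fin N,
          ((if (true:Bool) = true then p else 1 - p) * (if j = j₀ then (if (true:Bool) = true then (1:ℝ) else 0) else 1)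
           + (if (false:Bool) = true then p else 1 - p) * (if j = j₀ then (if (false:Bool) = true then (1:ℝ) else 0) else 1))
          = if j = j₀ then p else 1 := by
        intro j; by_cases h : j = j₀ <;> simp [h]
      rw [Finset.prod_congr rfl fun j _ => this j, Finset.prod_ite_eq' univ j₀ (fun _ => p)]
      simp
    · simp only [if_neg h, mul_one]
      exact sum_rowW p
  rw [Finset.prod_congr rfl fun i _ => inner i, Finset.prod_ite_eq' univ i₀ (fun _ => p)]
  simp

lemma sum_matProb_rowpair {N : ℕ} (p : ℝ) {i₀ i₁ : Fin N} (hne : i₀ ≠ i₁) :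
    ∑ A : Fin N → Fin N → Bool, matProb N p A * (if A i₀ = A i₁ then (1:ℝ) else 0)
      = (p ^ 2 + (1 - p) ^ 2) ^ N := by
  have hind : ∀ A : Fin N → Fin N → Bool,
      (if A i₀ = A i₁ then (1:ℝ) else 0)
      = ∑ s : Fin N → Bool, (if A i₀ = s then (1:ℝ) else 0) * (if A i₁ = s then (1:ℝ) else 0) := by
    intro A
    simp only [ite_mul, one_mul, zero_mul]
    rw [Finset.sum_ite_eq univ (A i₀) (fun s => if A i₁ = s then (1:ℝ) else 0)]
    simp [eq_comm]
  have key : ∀ (s : Fin N → Bool) (A : Fin N → Fin N → Bool),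
      matProb N p A * ((if A i₀ = s then (1:ℝ) else 0) * (if A i₁ = s then (1:ℝ) else 0))
      = ∏ i, (rowW N p (A i) * (if i = i₀ then (if A i = s then (1:ℝ) else 0) else 1)
          * (if i = i₁ then (if A i = s then (1:ℝ) else 0) else 1)) := by
    intro s A
    rw [Finset.prod_mul_distrib, Finset.prod_mul_distrib, ← matProb_eq_prod,
      Finset.prod_ite_eq' univ i₀ (fun i => if A i = s then (1:ℝ) else 0),
      Finset.prod_ite_eq' univ i₁ (fun i => if A i = s then (1:ℝ) else 0)]
    simp [mul_assoc]
  calc ∑ A : Fin N → Fin N → Bool, matProb N p A * (if A i₀ = A i₁ then (1:ℝ) else 0)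
      = ∑ s : Fin N → Bool, ∑ A : Fin N → Fin N → Bool,
          matProb N p A * ((if A i₀ = s then (1:ℝ) else 0) * (if A i₁ = s then (1:ℝ) else 0)) := by
        rw [Finset.sum_comm]
        exact Finset.sum_congr rfl fun A _ => by rw [hind A, Finset.mul_sum]
    _ = ∑ s : Fin N → Bool, (rowW N p s) ^ 2 := by
        refine Finset.sum_congr rfl fun s _ => ?_
        rw [Finset.sum_congr rfl fun A _ => key s A, sum_prod_rows
          (fun i r => rowW N p r * (if i = i₀ then (if r = s then (1:ℝ) else 0) else 1)
            * (if i = i₁ then (if r = s then (1:ℝ) else 0) else 1))]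
        have inner : ∀ i : Fin N, (∑ r : Fin N → Bool,
            rowW N p r * (if i = i₀ then (if r = s then (1:ℝ) else 0) else 1)
              * (if i = i₁ then (if r = s then (1:ℝ) else 0) else 1))
            = (if i = i₀ then rowW N p s else 1) * (if i = i₁ then rowW N p s else 1) := by
          intro i
          by_cases h0 : i = i₀
          · have h1 : ¬ i = i₁ := by rw [h0]; exact hne
            simp only [if_pos h0, if_neg h1, mul_one]
            simp [mul_ite, mul_one, mul_zero, Finset.sum_ite_eq']
          · by_cases h1 : i = i₁
            · simp only [if_pos h1, if_neg h0, mul_one]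
              simp [mul_ite, mul_one, mul_zero, Finset.sum_ite_eq']
            · simp only [if_neg h0, if_neg h1, mul_one]
              exact sum_rowW p
        rw [Finset.prod_congr rfl fun i _ => inner i, Finset.prod_mul_distrib,
          Finset.prod_ite_eq' univ i₀ (fun _ => rowW N p s),
          Finset.prod_ite_eq' univ i₁ (fun _ => rowW N p s)]
        simp [sq]
    _ = (p ^ 2 + (1 - p) ^ 2) ^ N := sum_rowW_sq p

lemma sum_matProb_edgeCount {N : ℕ} (p : ℝ) :
    ∑ A : Fin N → Fin N → Bool, matProb N p A * (edgeCount A : ℝ) = (N:ℝ) ^ 2 * p := by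
  have hcount : ∀ A : Fin N → Fin N → Bool, (edgeCount A : ℝ)
      = ∑ ij : Fin N × Fin N, (if A ij.1 ij.2 = true then (1:ℝ) else 0) := by
    intro A
    rw [edgeCount, Finset.card_filter]
    push_cast
    exact Finset.sum_congr rfl fun ij _ => by split <;> simp
  calc ∑ A : Fin N → Fin N → Bool, matProb N p A * (edgeCount A : ℝ)
      = ∑ ij : Fin N × Fin N, ∑ A : Fin N → Fin N → Bool,
          matProb N p A * (if A ij.1 ij.2 = true then (1:ℝ) else 0) := by
        rw [Finset.sum_comm]
        exact Finset.sum_congr rfl fun A _ => by rw [hcount A, Finset.mul_sum]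
    _ = ∑ _ij : Fin N × Fin N, p := Finset.sum_congr rfl fun ij _ => sum_matProb_entry p ij.1 ij.2
    _ = (N:ℝ) ^ 2 * p := by simp [sq]

def cls {N : ℕ} (A : Fin N → Fin N → Bool) : Finset (Fin N → Fin N → Bool) :=
  univ.image (fun σ : Equiv.Perm (Fin N) => fun i => A (σ i))

lemma mem_cls {N : ℕ} {A B : Fin N → Fin N → Bool} :
    B ∈ cls A ↔ ∃ σ : Equiv.Perm (Fin N), ∀ i j, A (σ i) j = B i j := by
  simp only [cls, Finset.mem_image, Finset.mem_univ, true_and]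
  constructor
  · rintro ⟨σ, rfl⟩; exact ⟨σ, fun i j => rfl⟩
  · rintro ⟨σ, h⟩; exact ⟨σ, by funext i j; exact h i j⟩

lemma edgeCount_perm {N : ℕ} (A : Fin N → Fin N → Bool) (σ : Equiv.Perm (Fin N)) :
    edgeCount (fun i => A (σ i)) = edgeCount A := by
  unfold edgeCount
  apply Finset.card_bij (fun ij _ => (σ ij.1, ij.2))
  · intro ij hij
    simp only [Finset.mem_filter, Finset.mem_univ, true_and] at hij ⊢
    exact hij
  · intro a ha b hb hab
    simp only [Prod.mk.injEq] at hab
    exact Prod.ext (σ.injective hab.1) hab.2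
  · intro ij hij
    refine ⟨(σ⁻¹ ij.1, ij.2), ?_, ?_⟩
    · simp only [Finset.mem_filter, Finset.mem_univ, true_and] at hij ⊢
      simpa using hij
    · simp

lemma matProb_perm {N : ℕ} (p : ℝ) (A : Fin N → Fin N → Bool) (σ : Equiv.Perm (Fin N)) :
    matProb N p (fun i => A (σ i)) = matProb N p A := by
  unfold matProb; rw [edgeCount_perm]

lemma autCard_eq_filter {N : ℕ} (A : Fin N → Fin N → Bool) :
    autCard A = (univ.filter fun σ : Equiv.Perm (Fin N) => ∀ i j, A (σ i) j = A i j).card := by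
  rw [autCard, Fintype.card_subtype]

lemma card_cls_mul_autCard {N : ℕ} (A : Fin N → Fin N → Bool) :
    (cls A).card * autCard A = N.factorial := by
  have h := Finset.card_eq_sum_card_fiberwise
    (f := fun σ : Equiv.Perm (Fin N) => (fun i => A (σ i) : Fin N → Fin N → Bool))
    (s := univ) (t := cls A)
    (fun σ _ => Finset.mem_image_of_mem _ (Finset.mem_univ σ))
  have hfiber : ∀ B ∈ cls A,
      (univ.filter fun σ : Equiv.Perm (Fin N) =>
        (fun i => A (σ i) : Fin N → Fin N → Bool) = B).card = autCard A := by
    intro B hB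
    obtain ⟨τ, -, hτ⟩ := Finset.mem_image.mp hB
    rw [autCard_eq_filter]
    apply Finset.card_bij' (fun σ _ => σ * τ⁻¹) (fun ρ _ => ρ * τ)
    · intro σ hσ
      simp only [Finset.mem_filter, Finset.mem_univ, true_and] at hσ ⊢
      intro i j
      have h1 : ∀ i, A (σ i) = A (τ i) := fun i => congrFun (hσ.trans hτ.symm) i
      have := h1 (τ⁻¹ i)
      simp only [Equiv.Perm.mul_apply]
      rw [this]
      simp
    · intro ρ hρ
      simp only [Finset.mem_filter, Finset.mem_univ, true_and] at hρ ⊢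
      rw [← hτ]
      funext i j
      simp only [Equiv.Perm.mul_apply]
      exact hρ (τ i) j
    · intro σ _; group
    · intro ρ _; group
  rw [Finset.sum_congr rfl hfiber, Finset.sum_const, smul_eq_mul] at h
  rw [← h, Finset.card_univ, Fintype.card_perm, Fintype.card_fin]

lemma matProb_pos {N : ℕ} {p : ℝ} (hp0 : 0 < p) (hp1 : p < 1) (A : Fin N → Fin N → Bool) :
    0 < matProb N p A :=
  mul_pos (pow_pos hp0 _) (pow_pos (by linarith) _)

lemma self_mem_cls {N : ℕ} (A : Fin N → Fin N → Bool) : A ∈ cls A :=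
  mem_cls.mpr ⟨1, fun i j => rfl⟩

lemma autCard_pos {N : ℕ} (A : Fin N → Fin N → Bool) : 0 < autCard A :=
  Fintype.card_pos_iff.mpr ⟨⟨1, fun i j => rfl⟩⟩

lemma classProb_mk {N : ℕ} (p : ℝ) (A : Fin N → Fin N → Bool) :
    classProb N p (Quotient.mk (rowRelSetoid N) A) = ((cls A).card : ℝ) * matProb N p A := by
  rw [classProb]
  rw [← Finset.sum_filter]
  have hset : (univ.filter fun B : Fin N → Fin N → Bool =>
      Quotient.mk (rowRelSetoid N) B = Quotient.mk (rowRelSetoid N) A) = cls A := by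
    ext B
    simp only [Finset.mem_filter, Finset.mem_univ, true_and, Quotient.eq, mem_cls]
    constructor
    · intro h; exact (rowRelSetoid N).iseqv.symm h
    · intro h; exact (rowRelSetoid N).iseqv.symm h
  rw [hset]
  have hconst : ∀ B ∈ cls A, matProb N p B = matProb N p A := by
    intro B hB
    obtain ⟨σ, -, rfl⟩ := Finset.mem_image.mp hB
    exact matProb_perm p A σ
  rw [Finset.sum_congr rfl hconst, Finset.sum_const, nsmul_eq_mul]

lemma logb_matProb {N : ℕ} {p : ℝ} (hp0 : 0 < p) (hp1 : p < 1) (A : Fin N → Fin N → Bool) :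
    Real.logb 2 (matProb N p A)
      = (edgeCount A : ℝ) * Real.logb 2 p
        + ((N:ℝ) ^ 2 - (edgeCount A : ℝ)) * Real.logb 2 (1 - p) := by
  have h1 : p ≠ 0 := ne_of_gt hp0
  have h2 : (1 - p) ≠ 0 := by linarith
  rw [matProb, Real.logb_mul (pow_ne_zero _ h1) (pow_ne_zero _ h2),
    Real.logb_pow, Real.logb_pow, Nat.cast_sub (edgeCount_le A)]
  push_cast
  ring

lemma sum_matProb_neg_logb {N : ℕ} {p : ℝ} (hp0 : 0 < p) (hp1 : p < 1) :
    ∑ A : Fin N → Fin N → Bool, matProb N p A * (-(Real.logb 2 (matProb N p A)))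
      = (N:ℝ) ^ 2 * binEnt p := by
  have key : ∀ A : Fin N → Fin N → Bool,
      matProb N p A * (-(Real.logb 2 (matProb N p A)))
      = (-(Real.logb 2 p)) * (matProb N p A * (edgeCount A : ℝ))
        + (-(Real.logb 2 (1 - p))) * ((N:ℝ) ^ 2 * matProb N p A - matProb N p A * (edgeCount A : ℝ)) := by
    intro A
    rw [logb_matProb hp0 hp1 A]
    ring
  rw [Finset.sum_congr rfl fun A _ => key A, Finset.sum_add_distrib,
    ← Finset.mul_sum, ← Finset.mul_sum, sum_matProb_edgeCount, Finset.sum_sub_distrib,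
    ← Finset.mul_sum, sum_matProb_edgeCount]
  rw [sum_matProb, binEnt]
  ring

lemma HBp_eq {N : ℕ} {p : ℝ} (hp0 : 0 < p) (hp1 : p < 1) :
    HBp N p = (N:ℝ) ^ 2 * binEnt p - Real.logb 2 (N.factorial : ℝ)
      + ∑ A : Fin N → Fin N → Bool, matProb N p A * Real.logb 2 (autCard A : ℝ) := by
  have step1 : HBp N p = ∑ A : Fin N → Fin N → Bool,
      matProb N p A * (-(Real.logb 2 (classProb N p (Quotient.mk (rowRelSetoid N) A)))) := by
    rw [HBp]
    have expand : ∀ ω : Quotient (rowRelSetoid N),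
        -(classProb N p ω * Real.logb 2 (classProb N p ω))
        = ∑ A : Fin N → Fin N → Bool,
            (if Quotient.mk (rowRelSetoid N) A = ω then
              matProb N p A * (-(Real.logb 2 (classProb N p ω))) else 0) := by
      intro ω
      have h1 : ∀ A : Fin N → Fin N → Bool, (if Quotient.mk (rowRelSetoid N) A = ω then
              matProb N p A * (-(Real.logb 2 (classProb N p ω))) else 0)
            = (if Quotient.mk (rowRelSetoid N) A = ω then matProb N p A else 0)
                * (-(Real.logb 2 (classProb N p ω))) := by
        intro A; rw [ite_mul, zero_mul]
      rw [Finset.sum_congr rfl fun A _ => h1 A, ← Finset.sum_mul, ← classProb]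
      ring
    rw [Finset.sum_congr rfl fun ω _ => expand ω, Finset.sum_comm]
    refine Finset.sum_congr rfl fun A _ => ?_
    rw [Finset.sum_ite_eq univ (Quotient.mk (rowRelSetoid N) A)
      (fun ω => matProb N p A * (-(Real.logb 2 (classProb N p ω))))]
    simp
  have step2 : ∀ A : Fin N → Fin N → Bool,
      Real.logb 2 (classProb N p (Quotient.mk (rowRelSetoid N) A))
      = Real.logb 2 (matProb N p A) + Real.logb 2 (N.factorial : ℝ)
          - Real.logb 2 (autCard A : ℝ) := by
    intro A
    have hP := matProb_pos hp0 hp1 A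
    have hc : (0:ℝ) < ((cls A).card : ℝ) := by
      exact_mod_cast Finset.card_pos.mpr ⟨A, self_mem_cls A⟩
    have ha : (0:ℝ) < (autCard A : ℝ) := by exact_mod_cast autCard_pos A
    have hfac : ((cls A).card : ℝ) * (autCard A : ℝ) = (N.factorial : ℝ) := by
      exact_mod_cast card_cls_mul_autCard A
    rw [classProb_mk, Real.logb_mul (ne_of_gt hc) (ne_of_gt hP), ← hfac,
      Real.logb_mul (ne_of_gt hc) (ne_of_gt ha)]
    ring
  rw [step1]
  have h2 : ∀ A : Fin N → Fin N → Bool,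
      matProb N p A * (-(Real.logb 2 (classProb N p (Quotient.mk (rowRelSetoid N) A))))
      = matProb N p A * (-(Real.logb 2 (matProb N p A)))
        - matProb N p A * Real.logb 2 (N.factorial : ℝ)
        + matProb N p A * Real.logb 2 (autCard A : ℝ) := by
    intro A; rw [step2 A]; ring
  rw [Finset.sum_congr rfl fun A _ => h2 A, Finset.sum_add_distrib, Finset.sum_sub_distrib,
    sum_matProb_neg_logb hp0 hp1, ← Finset.sum_mul, sum_matProb, one_mul]

lemma autCard_le_factorial {N : ℕ} (A : Fin N → Fin N → Bool) :
    autCard A ≤ N.factorial := by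
  calc autCard A ≤ Fintype.card (Equiv.Perm (Fin N)) := Fintype.card_subtype_le _
    _ = N.factorial := by rw [Fintype.card_perm, Fintype.card_fin]

lemma logb_autCard_le {N : ℕ} (A : Fin N → Fin N → Bool) :
    Real.logb 2 (autCard A : ℝ) ≤ Real.logb 2 (N.factorial : ℝ)
      * ∑ pr ∈ (univ : Finset (Fin N)).offDiag, (if A pr.1 = A pr.2 then (1:ℝ) else 0) := by
  have hlf : (0:ℝ) ≤ Real.logb 2 (N.factorial : ℝ) :=
    Real.logb_nonneg one_lt_two (by exact_mod_cast N.factorial_pos)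
  have hSnn : (0:ℝ) ≤ ∑ pr ∈ (univ : Finset (Fin N)).offDiag,
      (if A pr.1 = A pr.2 then (1:ℝ) else 0) :=
    Finset.sum_nonneg fun pr _ => by positivity
  by_cases h : ∃ pr ∈ (univ : Finset (Fin N)).offDiag, A pr.1 = A pr.2
  · obtain ⟨pr, hpr, heq⟩ := h
    have h1 : Real.logb 2 (autCard A : ℝ) ≤ Real.logb 2 (N.factorial : ℝ) := by
      apply Real.logb_le_logb_of_le one_lt_two (by exact_mod_cast autCard_pos A)
      exact_mod_cast autCard_le_factorial A
    have hS : (1:ℝ) ≤ ∑ pr ∈ (univ : Finset (Fin N)).offDiag,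
        (if A pr.1 = A pr.2 then (1:ℝ) else 0) := by
      have := Finset.single_le_sum (f := fun pr : Fin N × Fin N =>
        (if A pr.1 = A pr.2 then (1:ℝ) else 0)) (fun pr _ => by positivity) hpr
      simp only [if_pos heq] at this
      exact this
    calc Real.logb 2 (autCard A : ℝ) ≤ Real.logb 2 (N.factorial : ℝ) := h1
      _ = Real.logb 2 (N.factorial : ℝ) * 1 := (mul_one _).symm
      _ ≤ _ := mul_le_mul_of_nonneg_left hS hlf
  · push_neg at h
    have h1 : autCard A = 1 := by
      rw [autCard, Fintype.card_eq_one_iff]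
      refine ⟨⟨1, fun i j => rfl⟩, ?_⟩
      rintro ⟨σ, hσ⟩
      refine Subtype.ext (Equiv.ext fun i => ?_)
      by_contra hne
      exact h (σ i, i) (Finset.mem_offDiag.mpr ⟨Finset.mem_univ _, Finset.mem_univ _, hne⟩)
        (funext fun j => hσ i j)
    rw [h1]
    simpa using mul_nonneg hlf hSnn

lemma Eaut_nonneg {N : ℕ} {p : ℝ} (hp0 : 0 < p) (hp1 : p < 1) :
    0 ≤ ∑ A : Fin N → Fin N → Bool, matProb N p A * Real.logb 2 (autCard A : ℝ) :=
  Finset.sum_nonneg fun A _ => mul_nonneg (le_of_lt (matProb_pos hp0 hp1 A))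
    (Real.logb_nonneg one_lt_two (by exact_mod_cast autCard_pos A))

lemma Eaut_le {N : ℕ} {p : ℝ} (hp0 : 0 < p) (hp1 : p < 1) :
    ∑ A : Fin N → Fin N → Bool, matProb N p A * Real.logb 2 (autCard A : ℝ)
      ≤ Real.logb 2 (N.factorial : ℝ) * ((univ : Finset (Fin N)).offDiag.card : ℝ)
          * (p ^ 2 + (1 - p) ^ 2) ^ N := by
  have step1 : ∑ A : Fin N → Fin N → Bool, matProb N p A * Real.logb 2 (autCard A : ℝ)
      ≤ ∑ A : Fin N → Fin N → Bool, matProb N p A * (Real.logb 2 (N.factorial : ℝ)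
          * ∑ pr ∈ (univ : Finset (Fin N)).offDiag, (if A pr.1 = A pr.2 then (1:ℝ) else 0)) :=
    Finset.sum_le_sum fun A _ => mul_le_mul_of_nonneg_left (logb_autCard_le A)
      (le_of_lt (matProb_pos hp0 hp1 A))
  refine step1.trans ?_
  have hA : ∀ A : Fin N → Fin N → Bool,
      matProb N p A * (Real.logb 2 (N.factorial : ℝ)
        * ∑ pr ∈ (univ : Finset (Fin N)).offDiag, (if A pr.1 = A pr.2 then (1:ℝ) else 0))
      = ∑ pr ∈ (univ : Finset (Fin N)).offDiag,
          Real.logb 2 (N.factorial : ℝ) * (matProb N p A * (if A pr.1 = A pr.2 then (1:ℝ) else 0)) := by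
    intro A
    rw [Finset.mul_sum, Finset.mul_sum]
    exact Finset.sum_congr rfl fun pr _ => by ring
  rw [Finset.sum_congr rfl fun A _ => hA A, Finset.sum_comm]
  have hpr : ∀ pr ∈ (univ : Finset (Fin N)).offDiag,
      ∑ A : Fin N → Fin N → Bool,
        Real.logb 2 (N.factorial : ℝ) * (matProb N p A * (if A pr.1 = A pr.2 then (1:ℝ) else 0))
      = Real.logb 2 (N.factorial : ℝ) * (p ^ 2 + (1 - p) ^ 2) ^ N := by
    intro pr hpr
    rw [← Finset.mul_sum,
      sum_matProb_rowpair p (Finset.mem_offDiag.mp hpr).2.2]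
  rw [Finset.sum_congr rfl hpr, Finset.sum_const, nsmul_eq_mul]
  ring_nf
  exact le_refl _

lemma logb_factorial_le (N : ℕ) : Real.logb 2 (N.factorial : ℝ) ≤ (N:ℝ) ^ 2 := by
  have hnat : N.factorial ≤ 2 ^ (N ^ 2) := by
    calc N.factorial ≤ N ^ N := N.factorial_le_pow
      _ ≤ (2 ^ N) ^ N := Nat.pow_le_pow_left (Nat.le_of_lt (Nat.lt_two_pow_self (n := N))) N
      _ = 2 ^ (N * N) := (pow_mul 2 N N).symm
      _ = 2 ^ (N ^ 2) := by rw [sq]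
  calc Real.logb 2 (N.factorial : ℝ) ≤ Real.logb 2 ((2:ℝ) ^ (N ^ 2)) := by
        apply Real.logb_le_logb_of_le one_lt_two (by exact_mod_cast N.factorial_pos)
        exact_mod_cast hnat
    _ = (N:ℝ) ^ 2 := by
        rw [Real.logb_pow, Real.logb_self_eq_one (by norm_num)]
        push_cast; ring

lemma offDiag_card_le (N : ℕ) : (((univ : Finset (Fin N)).offDiag.card : ℕ) : ℝ) ≤ (N:ℝ) ^ 2 := by
  have : (univ : Finset (Fin N)).offDiag.card ≤ N ^ 2 := by
    rw [Finset.offDiag_card, Finset.card_univ, Fintype.card_fin, sq]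
    omega
  exact_mod_cast this

lemma pow_bound {p : ℝ} (hp0 : 0 < p) (hp1 : p < 1) (N : ℕ) :
    (p ^ 2 + (1 - p) ^ 2) ^ N ≤ Real.exp ((N:ℝ) * -(2 * p * (1 - p))) := by
  have hr0 : (0:ℝ) ≤ p ^ 2 + (1 - p) ^ 2 := by positivity
  have hr1 : p ^ 2 + (1 - p) ^ 2 ≤ Real.exp (-(2 * p * (1 - p))) := by
    calc p ^ 2 + (1 - p) ^ 2 = -(2 * p * (1 - p)) + 1 := by ring
      _ ≤ Real.exp (-(2 * p * (1 - p))) := Real.add_one_le_exp _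
  calc (p ^ 2 + (1 - p) ^ 2) ^ N ≤ (Real.exp (-(2 * p * (1 - p)))) ^ N :=
        pow_le_pow_left₀ hr0 hr1 N
    _ = Real.exp ((N:ℝ) * -(2 * p * (1 - p))) := (Real.exp_nat_mul _ N).symm


/-- Theorem 1: under `N·p(N)/ln N → ∞` and `N·(1−p(N))/ln N → ∞`, the gap
`H_Bp(N, p(N)) − (N²·H(p(N)) − log₂(N!))` is nonnegative for every `N` and tends to `0`. -/
theorem partially_labeled_entropy_asymptotic (p : ℕ → ℝ)
    (hp : ∀ N, 0 < p N ∧ p N < 1)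
    (hgrow : Filter.Tendsto (fun N : ℕ => (N : ℝ) * p N / Real.log N)
      Filter.atTop Filter.atTop)
    (hgrow' : Filter.Tendsto (fun N : ℕ => (N : ℝ) * (1 - p N) / Real.log N)
      Filter.atTop Filter.atTop) :
    (∀ N : ℕ, 0 ≤ HBp N (p N)
        - ((N : ℝ) ^ 2 * binEnt (p N) - Real.logb 2 (N.factorial : ℝ))) ∧
    Filter.Tendsto
      (fun N : ℕ => HBp N (p N)
        - ((N : ℝ) ^ 2 * binEnt (p N) - Real.logb 2 (N.factorial : ℝ)))
      Filter.atTop (nhds 0) := by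
  have key : ∀ N : ℕ, HBp N (p N) - ((N:ℝ) ^ 2 * binEnt (p N) - Real.logb 2 (N.factorial : ℝ))
      = ∑ A : Fin N → Fin N → Bool, matProb N (p N) A * Real.logb 2 (autCard A : ℝ) := by
    intro N; rw [HBp_eq (hp N).1 (hp N).2]; ring
  have hnn : ∀ N : ℕ, 0 ≤ HBp N (p N)
      - ((N:ℝ) ^ 2 * binEnt (p N) - Real.logb 2 (N.factorial : ℝ)) := by
    intro N; rw [key N]; exact Eaut_nonneg (hp N).1 (hp N).2
  refine ⟨hnn, ?_⟩
  set u : ℕ → ℝ := fun N => (N:ℝ) ^ 2 * (N:ℝ) ^ 2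
    * Real.exp ((N:ℝ) * -(2 * p N * (1 - p N))) with hu_def
  have hub : ∀ N : ℕ, HBp N (p N)
      - ((N:ℝ) ^ 2 * binEnt (p N) - Real.logb 2 (N.factorial : ℝ)) ≤ u N := by
    intro N
    rw [key N]
    refine (Eaut_le (hp N).1 (hp N).2).trans ?_
    have h1 := logb_factorial_le N
    have h2 := offDiag_card_le N
    have h3 := pow_bound (hp N).1 (hp N).2 N
    have hl : (0:ℝ) ≤ Real.logb 2 (N.factorial : ℝ) :=
      Real.logb_nonneg one_lt_two (by exact_mod_cast N.factorial_pos)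
    have hc : (0:ℝ) ≤ (((univ : Finset (Fin N)).offDiag.card : ℕ) : ℝ) := by positivity
    have hr : (0:ℝ) ≤ (p N ^ 2 + (1 - p N) ^ 2) ^ N := by positivity
    have hN2 : (0:ℝ) ≤ (N:ℝ) ^ 2 := by positivity
    calc Real.logb 2 (N.factorial : ℝ) * (((univ : Finset (Fin N)).offDiag.card : ℕ) : ℝ)
          * (p N ^ 2 + (1 - p N) ^ 2) ^ N
        ≤ (N:ℝ) ^ 2 * (N:ℝ) ^ 2 * Real.exp ((N:ℝ) * -(2 * p N * (1 - p N))) := by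
          apply mul_le_mul (mul_le_mul h1 h2 hc hN2) h3 hr (by positivity)
      _ = u N := rfl
  -- the upper bound tends to 0
  have hmin : Filter.Tendsto (fun N : ℕ =>
      min ((N:ℝ) * p N / Real.log N) ((N:ℝ) * (1 - p N) / Real.log N))
      Filter.atTop Filter.atTop := by
    rw [Filter.tendsto_atTop]
    intro b
    filter_upwards [Filter.tendsto_atTop.1 hgrow b, Filter.tendsto_atTop.1 hgrow' b]
      with N h1 h2
    exact le_min h1 h2
  have hhalf : Filter.Tendsto (fun N : ℕ =>
      (1/2 : ℝ) * min ((N:ℝ) * p N / Real.log N) ((N:ℝ) * (1 - p N) / Real.log N))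
      Filter.atTop Filter.atTop := hmin.const_mul_atTop (by norm_num)
  set c : ℕ → ℝ := fun N => (N:ℝ) * p N * (1 - p N) / Real.log N with hc_def
  have hc_tendsto : Filter.Tendsto c Filter.atTop Filter.atTop := by
    apply Filter.tendsto_atTop_mono' Filter.atTop _ hhalf
    filter_upwards [Filter.eventually_ge_atTop 2] with N hN
    have hlog : (0:ℝ) < Real.log N := Real.log_pos (by exact_mod_cast hN)
    have hp0 := (hp N).1
    have hp1 := (hp N).2
    have hNpos : (0:ℝ) ≤ (N:ℝ) := Nat.cast_nonneg N
    rcases le_total (p N) (1/2 : ℝ) with hph | hph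
    · have ha : (0:ℝ) ≤ (N:ℝ) * p N / Real.log N :=
        div_nonneg (mul_nonneg hNpos hp0.le) hlog.le
      calc (1/2 : ℝ) * min ((N:ℝ) * p N / Real.log N) ((N:ℝ) * (1 - p N) / Real.log N)
          ≤ (1/2 : ℝ) * ((N:ℝ) * p N / Real.log N) :=
            mul_le_mul_of_nonneg_left (min_le_left _ _) (by norm_num)
        _ = ((N:ℝ) * p N / Real.log N) * (1/2) := by ring
        _ ≤ ((N:ℝ) * p N / Real.log N) * (1 - p N) :=
            mul_le_mul_of_nonneg_left (by linarith) ha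
        _ = c N := by rw [hc_def]; ring
    · have hb : (0:ℝ) ≤ (N:ℝ) * (1 - p N) / Real.log N :=
        div_nonneg (mul_nonneg hNpos (by linarith)) hlog.le
      calc (1/2 : ℝ) * min ((N:ℝ) * p N / Real.log N) ((N:ℝ) * (1 - p N) / Real.log N)
          ≤ (1/2 : ℝ) * ((N:ℝ) * (1 - p N) / Real.log N) :=
            mul_le_mul_of_nonneg_left (min_le_right _ _) (by norm_num)
        _ = ((N:ℝ) * (1 - p N) / Real.log N) * (1/2) := by ring
        _ ≤ ((N:ℝ) * (1 - p N) / Real.log N) * (p N) :=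
            mul_le_mul_of_nonneg_left (by linarith) hb
        _ = c N := by rw [hc_def]; ring
  have h4 : Filter.Tendsto (fun N : ℕ => (4:ℝ) - 2 * c N) Filter.atTop Filter.atBot := by
    have h2c : Filter.Tendsto (fun N : ℕ => (2:ℝ) * c N) Filter.atTop Filter.atTop :=
      hc_tendsto.const_mul_atTop (by norm_num)
    have := Filter.tendsto_atBot_add_const_left Filter.atTop (4:ℝ)
      (Filter.tendsto_neg_atTop_atBot.comp h2c)
    simpa [Function.comp, sub_eq_add_neg] using this
  have hg : Filter.Tendsto (fun N : ℕ => 4 * Real.log N - 2 * ((N:ℝ) * p N * (1 - p N)))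
      Filter.atTop Filter.atBot := by
    apply Filter.tendsto_atBot_mono' Filter.atTop _ h4
    filter_upwards [Filter.eventually_ge_atTop 3, Filter.tendsto_atTop.1 hc_tendsto 2]
      with N hN hcN
    have hNpos : (0:ℝ) < (N:ℝ) := by
      have : (3:ℝ) ≤ (N:ℝ) := by exact_mod_cast hN
      linarith
    have hlog1 : (1:ℝ) ≤ Real.log N := by
      rw [Real.le_log_iff_exp_le hNpos]
      have h1 : Real.exp 1 < 2.7182818286 := Real.exp_one_lt_d9
      have h3 : (3:ℝ) ≤ (N:ℝ) := by exact_mod_cast hN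
      linarith
    have hlogne : Real.log N ≠ 0 := by linarith
    have hX : (N:ℝ) * p N * (1 - p N) = c N * Real.log N := by
      rw [hc_def]
      field_simp
    calc 4 * Real.log N - 2 * ((N:ℝ) * p N * (1 - p N))
        = Real.log N * (4 - 2 * c N) := by rw [hX]; ring
      _ ≤ 1 * (4 - 2 * c N) := mul_le_mul_of_nonpos_right hlog1 (by linarith)
      _ = 4 - 2 * c N := one_mul _
  have hexp : Filter.Tendsto
      (fun N : ℕ => Real.exp (4 * Real.log N - 2 * ((N:ℝ) * p N * (1 - p N))))
      Filter.atTop (nhds 0) := Real.tendsto_exp_atBot.comp hg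
  have huexp : Filter.Tendsto u Filter.atTop (nhds 0) := by
    apply hexp.congr'
    filter_upwards [Filter.eventually_ge_atTop 1] with N hN
    have hNpos : (0:ℝ) < (N:ℝ) := by exact_mod_cast Nat.lt_of_lt_of_le Nat.zero_lt_one hN
    have h1 : Real.exp (4 * Real.log N) = (N:ℝ) ^ 4 := by
      rw [show (4:ℝ) * Real.log N = Real.log ((N:ℝ) ^ 4) by rw [Real.log_pow]; norm_num,
        Real.exp_log (pow_pos hNpos 4)]
    rw [hu_def, sub_eq_add_neg, Real.exp_add, h1]
    have h2 : -(2 * ((N:ℝ) * p N * (1 - p N))) = (N:ℝ) * -(2 * p N * (1 - p N)) := by ring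
    rw [h2]
    ring
  exact squeeze_zero hnn hub huexp
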